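/- Correlation bound with the entanglement spectrum: for any bipartite density matrix ρ_{AB} with ρ_A positive definite, and any operator O on H_A ⊗ H_B, |Tr(ρ_{AB} ((log ρ_A) ⊗ I_B) O)| ≤ 6 ‖O‖ log d_A, where d_A ≥ 2 is the dimension of H_A and ‖O‖ the operator norm. -/

import Mathlib

set_option linter.unusedSectionVars false
set_option maxHeartbeats 1000000


noncomputable section
open Matrix Finset
open scoped ComplexOrder

/-- Matrix logarithm via the spectral decomposition (junk value `0` for
non-Hermitian input). -/
def matLog {n : Type*} [Fintype n] [DecidableEq n] (ρ : Matrix n n ℂ) :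
    Matrix n n ℂ :=
  if h : ρ.IsHermitian then
    (h.eigenvectorUnitary : Matrix n n ℂ) *
      Matrix.diagonal (fun i => (Real.log (h.eigenvalues i) : ℂ)) *
      star (h.eigenvectorUnitary : Matrix n n ℂ)
  else 0

/-- Trace norm `‖X‖₁ = Tr √(XᴴX)`. -/
def traceNorm {n : Type*} [Fintype n] [DecidableEq n] (X : Matrix n n ℂ) : ℝ :=
  ((((Matrix.posSemidef_conjTranspose_mul_self X).1.eigenvectorUnitary : Matrix n n ℂ) *
      Matrix.diagonal (((↑) : ℝ → ℂ) ∘ (√·) ∘ (Matrix.posSemidef_conjTranspose_mul_self X).1.eigenvalues) *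
      (star (Matrix.posSemidef_conjTranspose_mul_self X).1.eigenvectorUnitary : Matrix n n ℂ)).trace).re

/-- Operator (spectral) norm of a matrix. -/
def opNorm {n : Type*} [Fintype n] [DecidableEq n] (X : Matrix n n ℂ) : ℝ :=
  ‖Matrix.toEuclideanCLM (𝕜 := ℂ) X‖

/-- A density matrix: positive semidefinite with unit trace. -/
def IsDensityMatrix {n : Type*} [Fintype n] [DecidableEq n]
    (ρ : Matrix n n ℂ) : Prop :=
  ρ.PosSemidef ∧ ρ.trace = 1

variable {α β : Type*} [Fintype α] [Fintype β] [DecidableEq α] [DecidableEq β]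

/-- Partial trace over the second factor. -/
def ptrB (ρ : Matrix (α × β) (α × β) ℂ) : Matrix α α ℂ :=
  Matrix.of fun a a' => ∑ b : β, ρ (a, b) (a', b)

/-- Extension of an operator on `A` by the identity on `B`. -/
def extA (M : Matrix α α ℂ) : Matrix (α × β) (α × β) ℂ :=
  Matrix.of fun x y => M x.1 y.1 * (if x.2 = y.2 then 1 else 0)

/-- Extension of an operator on `B` by the identity on `A`. -/
def extB (M : Matrix β β ℂ) : Matrix (α × β) (α × β) ℂ :=
  Matrix.of fun x y => (if x.1 = y.1 then 1 else 0) * M x.2 y.2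

/-- The truncated tail `Δ_A^Λ` of the entanglement spectrum of `ρ_A`:
`-Σ_{p_i < 1/Λ} (log p_i) |i⟩⟨i|` in the eigenbasis of `ρ_A`. -/
def specTail (ρA : Matrix α α ℂ) (Λ : ℝ) : Matrix α α ℂ :=
  if h : ρA.IsHermitian then
    (h.eigenvectorUnitary : Matrix α α ℂ) *
      Matrix.diagonal (fun i =>
        if h.eigenvalues i < 1 / Λ then (-(Real.log (h.eigenvalues i)) : ℂ)
        else 0) *
      star (h.eigenvectorUnitary : Matrix α α ℂ)
  else 0


lemma extA_mul (M N : Matrix α α ℂ) :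
    (extA (M * N) : Matrix (α × β) (α × β) ℂ) = extA M * extA N := by
  ext ⟨a, b⟩ ⟨a', b'⟩
  simp [extA, mul_apply, Fintype.sum_prod_type, ite_and, mul_ite, Finset.sum_ite_eq,
    Finset.sum_mul]

lemma extA_conjTranspose (M : Matrix α α ℂ) :
    (extA M : Matrix (α × β) (α × β) ℂ)ᴴ = extA Mᴴ := by
  ext ⟨a, b⟩ ⟨a', b'⟩
  simp [extA, conjTranspose_apply, apply_ite (starRingEnd ℂ), eq_comm]

lemma extA_one : (extA 1 : Matrix (α × β) (α × β) ℂ) = 1 := by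
  ext ⟨a, b⟩ ⟨a', b'⟩
  simp only [extA, of_apply, one_apply, Prod.ext_iff]
  split_ifs <;> simp_all

lemma extA_diagonal (f : α → ℂ) :
    (extA (Matrix.diagonal f) : Matrix (α × β) (α × β) ℂ) =
      Matrix.diagonal (fun j : α × β => f j.1) := by
  ext ⟨a, b⟩ ⟨a', b'⟩
  simp only [extA, of_apply, Matrix.diagonal, Prod.ext_iff]
  split_ifs <;> simp_all

lemma col_sq_sum {m n : Type*} [Fintype m] (Y : Matrix m n ℂ) (k : n) :
    (Yᴴ * Y) k k = ((∑ j, ‖Y j k‖ ^ 2 : ℝ) : ℂ) := by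
  push_cast
  simp [mul_apply, conjTranspose_apply, RCLike.conj_mul]

lemma trace_diag_mul {n : Type*} [Fintype n] [DecidableEq n] (f : n → ℂ)
    (M : Matrix n n ℂ) : (Matrix.diagonal f * M).trace = ∑ j, f j * M j j := by
  simp [Matrix.trace, Matrix.diag, mul_apply, Matrix.diagonal]

lemma cs_sqrt {ι : Type*} (s : Finset ι) (f g : ι → ℝ) (hf : ∀ i ∈ s, 0 ≤ f i)
    (hg : ∀ i ∈ s, 0 ≤ g i) :
    ∑ i ∈ s, f i * g i ≤
      Real.sqrt (∑ i ∈ s, f i ^ 2) * Real.sqrt (∑ i ∈ s, g i ^ 2) := by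
  have h0 : 0 ≤ ∑ i ∈ s, f i * g i :=
    Finset.sum_nonneg fun i hi => mul_nonneg (hf i hi) (hg i hi)
  have h := Real.sqrt_le_sqrt (Finset.sum_mul_sq_le_sq_mul_sq s f g)
  rwa [Real.sqrt_sq h0, Real.sqrt_mul (Finset.sum_nonneg fun i _ => sq_nonneg (f i))] at h

lemma sum_diag_extA (ρ : Matrix (α × β) (α × β) ℂ) (U : Matrix α α ℂ) (i : α) :
    ∑ b : β, ((extA U : Matrix (α × β) (α × β) ℂ)ᴴ * ρ *
        (extA U : Matrix (α × β) (α × β) ℂ)) (i, b) (i, b) =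
      (Uᴴ * ptrB ρ * U) i i := by
  rw [extA_conjTranspose]
  simp only [mul_apply, extA, ptrB, of_apply, Fintype.sum_prod_type, mul_ite, ite_mul,
    mul_zero, zero_mul, mul_one, one_mul, Finset.sum_ite_eq, Finset.sum_ite_eq',
    Finset.mem_univ, if_true, Finset.sum_mul, Finset.mul_sum]
  rw [Finset.sum_comm]
  exact Finset.sum_congr rfl fun a _ => Finset.sum_comm

lemma log_large {d x : ℝ} (hd : 2 ≤ d) (h1 : (d ^ 4)⁻¹ ≤ x) (h2 : x ≤ 1) :
    |Real.log x| ≤ 4 * Real.log d := by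
  have hd0 : (0:ℝ) < d := lt_of_lt_of_le two_pos hd
  have hx0 : 0 < x := lt_of_lt_of_le (by positivity) h1
  have hlx : Real.log x ≤ 0 := Real.log_nonpos hx0.le h2
  rw [abs_of_nonpos hlx]
  have : -Real.log x = Real.log x⁻¹ := (Real.log_inv x).symm
  rw [this]
  calc Real.log x⁻¹ ≤ Real.log (d ^ 4) := by
        apply Real.log_le_log (by positivity)
        exact (inv_le_comm₀ (by positivity) hx0).mp h1
      _ = 4 * Real.log d := by rw [Real.log_pow]; push_cast; ring

lemma log_small {d x : ℝ} (hd : 2 ≤ d) (h0 : 0 < x) (h1 : x < (d ^ 4)⁻¹) :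
    |Real.log x| * Real.sqrt x ≤ 2 * Real.log d / d := by
  have hd0 : (0:ℝ) < d := lt_of_lt_of_le two_pos hd
  set u := Real.sqrt x with hu
  have hu0 : 0 < u := Real.sqrt_pos.mpr h0
  have huu : u < (d ^ 2)⁻¹ := by
    have : ((d ^ 2)⁻¹ : ℝ) = Real.sqrt ((d ^ 4)⁻¹) := by
      rw [show (d:ℝ)^4 = (d^2)^2 by ring, Real.sqrt_inv, Real.sqrt_sq (by positivity)]
    rw [this]
    exact Real.sqrt_lt_sqrt h0.le h1
  have hxu : x = u ^ 2 := (Real.sq_sqrt h0.le).symm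
  have hlog : |Real.log x| = 2 * Real.log u⁻¹ := by
    have hu1 : u < 1 :=
      lt_of_lt_of_le huu (by rw [inv_le_one_iff₀]; right; nlinarith)
    have : Real.log x = 2 * Real.log u := by
      rw [hxu, Real.log_pow]; push_cast; ring
    rw [this, Real.log_inv, abs_of_nonpos (by nlinarith [Real.log_nonpos hu0.le hu1.le])]
    ring
  rw [hlog]
  set t := u⁻¹ with ht
  have ht2 : d ^ 2 ≤ t := by
    rw [ht, le_inv_comm₀ (by positivity) hu0]
    exact huu.le
  have he : Real.exp 1 ≤ d ^ 2 := by nlinarith [Real.exp_one_lt_d9]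
  have hanti := Real.log_div_self_antitoneOn (a := d ^ 2) (b := t)
    he (le_trans he ht2) ht2
  have hlogd : 0 < Real.log d := Real.log_pos (by linarith)
  have hut : u = t⁻¹ := by rw [ht, inv_inv]
  rw [hut]
  have h1' : Real.log t / t ≤ Real.log (d ^ 2) / d ^ 2 := hanti
  rw [Real.log_pow] at h1'
  push_cast at h1'
  have ht0 : 0 < t := by positivity
  calc 2 * Real.log t * t⁻¹ = 2 * (Real.log t / t) := by ring
    _ ≤ 2 * (2 * Real.log d / d ^ 2) := by linarith
    _ ≤ 2 * Real.log d / d := by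
        rw [← mul_div_assoc, div_le_div_iff₀ (by positivity) hd0]
        nlinarith [mul_nonneg (mul_nonneg hlogd.le hd0.le) (sub_nonneg.mpr hd)]

open scoped Matrix.Norms.L2Operator in
lemma col_mul_bound {m : Type*} [Fintype m] [DecidableEq m] (O S : Matrix m m ℂ) (k : m) :
    (∑ j, ‖(O * S) j k‖ ^ 2) ≤ opNorm O ^ 2 * ∑ i, ‖S i k‖ ^ 2 := by
  have hx := Matrix.l2_opNorm_mulVec O
    ((WithLp.equiv 2 (m → ℂ)).symm (fun i => S i k))
  have hOS : ∀ j, (O * S) j k = (O *ᵥ fun i => S i k) j := by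
    intro j; simp [Matrix.mul_apply, Matrix.mulVec, dotProduct]
  have hnorm1 : ‖(EuclideanSpace.equiv m ℂ).symm
      (O *ᵥ (WithLp.equiv 2 (m → ℂ)).symm (fun i => S i k))‖ ^ 2 =
      ∑ j, ‖(O * S) j k‖ ^ 2 := by
    rw [EuclideanSpace.norm_eq]
    rw [Real.sq_sqrt (Finset.sum_nonneg fun j _ => sq_nonneg _)]
    refine Finset.sum_congr rfl fun j _ => ?_
    rw [hOS]
    rfl
  have hnorm2 : ‖((WithLp.equiv 2 (m → ℂ)).symm (fun i => S i k) :
      EuclideanSpace ℂ m)‖ ^ 2 = ∑ i, ‖S i k‖ ^ 2 := by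
    rw [EuclideanSpace.norm_eq, Real.sq_sqrt (Finset.sum_nonneg fun j _ => sq_nonneg _)]
    rfl
  have hON : ‖O‖ = opNorm O := rfl
  have h := mul_le_mul hx hx (norm_nonneg _) (by positivity)
  rw [← pow_two, ← pow_two] at h
  rw [hnorm1] at h
  calc (∑ j, ‖(O * S) j k‖ ^ 2) ≤ (‖O‖ * ‖_‖) ^ 2 := h
    _ = opNorm O ^ 2 * ∑ i, ‖S i k‖ ^ 2 := by
        rw [mul_pow, hnorm2, hON]

open scoped MatrixOrder in
lemma exists_sqrt_psd {m : Type*} [Fintype m] [DecidableEq m] {A : Matrix m m ℂ}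
    (hA : A.PosSemidef) : ∃ S : Matrix m m ℂ, S * S = A ∧ Sᴴ = S :=
  ⟨CFC.sqrt A, CFC.sqrt_mul_sqrt_self A hA.nonneg, (CFC.sqrt_nonneg A).posSemidef.1⟩

/-- correlation bound with the entanglement spectrum:
`|Tr(ρ_{AB} ((log ρ_A) ⊗ I_B) O)| ≤ 6 ‖O‖ log d_A`. -/
theorem entanglement_spectrum_correlation_bound
    (ρ : Matrix (α × β) (α × β) ℂ) (hρ : IsDensityMatrix ρ)
    (hA : (ptrB ρ).PosDef) (hd : 2 ≤ Fintype.card α)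
    (O : Matrix (α × β) (α × β) ℂ) :
    ‖(ρ * extA (matLog (ptrB ρ)) * O).trace‖ ≤
      6 * opNorm O * Real.log (Fintype.card α) := by
  classical
  obtain ⟨hpsd, htr⟩ := hρ
  set ρA := ptrB ρ with hρAdef
  have hH : ρA.IsHermitian := hA.1
  set d : ℝ := (Fintype.card α : ℝ) with hdd
  have hd2 : (2:ℝ) ≤ d := by rw [hdd]; exact_mod_cast hd
  have hd0 : (0:ℝ) < d := by linarith
  have hlogd0 : 0 ≤ Real.log d := Real.log_nonneg (by linarith)
  set p : α → ℝ := hH.eigenvalues with hpdef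
  set U : Matrix α α ℂ := (hH.eigenvectorUnitary : Matrix α α ℂ) with hUdef
  have hU1 : Uᴴ * U = 1 := by
    rw [hUdef, ← Matrix.star_eq_conjTranspose]
    exact ((Unitary.mem_iff).mp hH.eigenvectorUnitary.2).1
  have hU2 : U * Uᴴ = 1 := by
    rw [hUdef, ← Matrix.star_eq_conjTranspose]
    exact ((Unitary.mem_iff).mp hH.eigenvectorUnitary.2).2
  set W : Matrix (α × β) (α × β) ℂ := extA U with hWdef
  have hW1 : Wᴴ * W = 1 := by
    rw [hWdef, extA_conjTranspose, ← extA_mul, hU1, extA_one]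
  have hW2 : W * Wᴴ = 1 := by
    rw [hWdef, extA_conjTranspose, ← extA_mul, hU2, extA_one]
  have hspec : ρA = U * Matrix.diagonal (fun i => (p i : ℂ)) * Uᴴ := by
    exact hH.spectral_theorem
  have hppos : ∀ i, 0 < p i := fun i => hA.eigenvalues_pos i
  have hpsum : ∑ i, p i = 1 := by
    have h1 : ρA.trace = ρ.trace := by
      simp [hρAdef, ptrB, Matrix.trace, Matrix.diag, Fintype.sum_prod_type]
    have h2 : ρA.trace = ∑ i, (p i : ℂ) := by
      rw [hspec, Matrix.trace_mul_cycle, hU1, Matrix.one_mul, Matrix.trace_diagonal]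
    rw [h1, htr] at h2
    exact_mod_cast h2.symm
  have hple : ∀ i, p i ≤ 1 := by
    intro i
    have h := Finset.single_le_sum (f := p) (fun j _ => (hppos j).le) (Finset.mem_univ i)
    rw [hpsum] at h; exact h
  -- trace identity
  have hlogρA : matLog ρA =
      U * Matrix.diagonal (fun i => (Real.log (p i) : ℂ)) * Uᴴ := by
    rw [matLog, dif_pos hH, Matrix.star_eq_conjTranspose]
  set D : Matrix (α × β) (α × β) ℂ :=
    Matrix.diagonal (fun j : α × β => (Real.log (p j.1) : ℂ)) with hDdef
  have hextlog : (extA (matLog ρA) : Matrix (α × β) (α × β) ℂ) = W * D * Wᴴ := by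
    rw [hlogρA, extA_mul, extA_mul, extA_diagonal, extA_conjTranspose, hWdef]
  set N : Matrix (α × β) (α × β) ℂ := Wᴴ * O * ρ * W with hNdef
  have hkey : (ρ * extA (matLog ρA) * O).trace =
      ∑ j : α × β, (Real.log (p j.1) : ℂ) * N j j := by
    rw [hextlog,
      show ρ * (W * D * Wᴴ) * O = (ρ * W) * (D * (Wᴴ * O)) by
        simp only [Matrix.mul_assoc],
      Matrix.trace_mul_comm,
      show (D * (Wᴴ * O)) * (ρ * W) = D * (Wᴴ * O * ρ * W) by
        simp only [Matrix.mul_assoc],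
      trace_diag_mul]
  -- Cauchy–Schwarz setup
  obtain ⟨S, hSS, hSH⟩ := exists_sqrt_psd hpsd
  set P : Matrix (α × β) (α × β) ℂ := Wᴴ * O * S with hPdef
  set Q : Matrix (α × β) (α × β) ℂ := S * W with hQdef
  have hNPQ : N = P * Q := by
    rw [hNdef, hPdef, hQdef, ← hSS]; simp only [Matrix.mul_assoc]
  set Af : α × β → ℝ := fun j => ∑ k, ‖P j k‖ ^ 2 with hAf
  set qf : α × β → ℝ := fun j => ∑ k, ‖Q k j‖ ^ 2 with hqf
  have hAnn : ∀ j, 0 ≤ Af j := fun j => Finset.sum_nonneg fun k _ => sq_nonneg _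
  have hqnn : ∀ j, 0 ≤ qf j := fun j => Finset.sum_nonneg fun k _ => sq_nonneg _
  have hF1 : ∀ j, ‖N j j‖ ≤ Real.sqrt (Af j) * Real.sqrt (qf j) := by
    intro j
    rw [hNPQ]
    have hPQ : (P * Q) j j = ∑ k, P j k * Q k j := by simp [mul_apply]
    rw [hPQ]
    calc ‖∑ k, P j k * Q k j‖
        ≤ ∑ k, ‖P j k‖ * ‖Q k j‖ := by
          simpa using
            (norm_sum_le Finset.univ (fun k => P j k * Q k j)).trans
              (le_of_eq (Finset.sum_congr rfl fun k _ => norm_mul _ _))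
      _ ≤ Real.sqrt (∑ k, ‖P j k‖ ^ 2) * Real.sqrt (∑ k, ‖Q k j‖ ^ 2) :=
          cs_sqrt _ _ _ (fun _ _ => norm_nonneg _) (fun _ _ => norm_nonneg _)
  -- F2 : total Frobenius bound
  have hPcol : ∀ k, (∑ j, ‖P j k‖ ^ 2) = ∑ j, ‖(O * S) j k‖ ^ 2 := by
    intro k
    have h1 : Pᴴ * P = (O * S)ᴴ * (O * S) := by
      rw [hPdef, show Wᴴ * O * S = W.conjTranspose * (O * S) by
        simp only [Matrix.mul_assoc]]
      rw [Matrix.conjTranspose_mul, Matrix.conjTranspose_conjTranspose]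
      rw [show (O * S)ᴴ * W * (Wᴴ * (O * S)) = (O * S)ᴴ * (W * Wᴴ) * (O * S) by
        simp only [Matrix.mul_assoc], hW2, Matrix.mul_one]
    have h2 := col_sq_sum P k
    rw [h1, col_sq_sum (O * S) k] at h2
    exact_mod_cast h2.symm
  have hcol : ∀ k, (∑ j, ‖(O * S) j k‖ ^ 2) ≤ opNorm O ^ 2 * ∑ i, ‖S i k‖ ^ 2 :=
    fun k => col_mul_bound O S k
  have hSfro : (∑ k : α × β, ∑ i, ‖S i k‖ ^ 2) = 1 := by
    have h1 : ∀ k, ((Sᴴ * S) k k : ℂ) = ((∑ i, ‖S i k‖ ^ 2 : ℝ) : ℂ) := fun k =>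
      col_sq_sum S k
    have h2 : (Sᴴ * S).trace = ρ.trace := by rw [hSH, hSS]
    rw [htr] at h2
    have h3 : (∑ k : α × β, ((∑ i, ‖S i k‖ ^ 2 : ℝ) : ℂ)) = 1 := by
      rw [← Finset.sum_congr rfl fun k _ => (h1 k)]
      exact h2
    exact_mod_cast h3
  have hF2 : ∑ j : α × β, Af j ≤ opNorm O ^ 2 := by
    calc ∑ j : α × β, Af j = ∑ k : α × β, ∑ j, ‖P j k‖ ^ 2 := Finset.sum_comm
      _ = ∑ k : α × β, ∑ j, ‖(O * S) j k‖ ^ 2 :=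
          Finset.sum_congr rfl fun k _ => hPcol k
      _ ≤ ∑ k : α × β, opNorm O ^ 2 * ∑ i, ‖S i k‖ ^ 2 :=
          Finset.sum_le_sum fun k _ => hcol k
      _ = opNorm O ^ 2 * ∑ k : α × β, ∑ i, ‖S i k‖ ^ 2 := by
          rw [Finset.mul_sum]
      _ = opNorm O ^ 2 := by rw [hSfro, mul_one]
  -- F3
  have hF3 : ∀ i, ∑ b, qf (i, b) = p i := by
    intro i
    have hQQ : Qᴴ * Q = Wᴴ * ρ * W := by
      rw [hQdef, Matrix.conjTranspose_mul, hSH,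
        show Wᴴ * S * (S * W) = Wᴴ * (S * S) * W by simp only [Matrix.mul_assoc], hSS]
    have h1 : ∀ j : α × β, ((qf j : ℝ) : ℂ) = (Wᴴ * ρ * W) j j := by
      intro j; rw [← hQQ]; exact (col_sq_sum Q j).symm
    have h2 := sum_diag_extA ρ U i
    have h3 : Uᴴ * ptrB ρ * U = Matrix.diagonal (fun i => (p i : ℂ)) := by
      rw [← hρAdef, hspec,
        show Uᴴ * (U * Matrix.diagonal (fun i => (p i : ℂ)) * Uᴴ) * U =
          (Uᴴ * U) * Matrix.diagonal (fun i => (p i : ℂ)) * (Uᴴ * U) by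
            simp only [Matrix.mul_assoc], hU1, Matrix.one_mul, Matrix.mul_one]
    rw [h3] at h2
    have h4 : (∑ b, ((qf (i, b) : ℝ) : ℂ)) = ((p i : ℝ) : ℂ) := by
      rw [Finset.sum_congr rfl fun b _ => h1 (i, b)]
      rw [← hWdef] at h2
      rw [h2, Matrix.diagonal_apply_eq]
    exact_mod_cast h4
  -- assemble
  set s : α → ℝ := fun i => ∑ b, ‖N (i, b) (i, b)‖ with hsdef
  set a : α → ℝ := fun i => ∑ b, Af (i, b) with hadef
  have hann : ∀ i, 0 ≤ a i := fun i => Finset.sum_nonneg fun b _ => hAnn _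
  have hsnn : ∀ i, 0 ≤ s i := fun i =>
    Finset.sum_nonneg fun b _ => norm_nonneg _
  have hs_le : ∀ i, s i ≤ Real.sqrt (a i) * Real.sqrt (p i) := by
    intro i
    calc s i ≤ ∑ b, Real.sqrt (Af (i, b)) * Real.sqrt (qf (i, b)) :=
          Finset.sum_le_sum fun b _ => hF1 (i, b)
      _ ≤ Real.sqrt (∑ b, Real.sqrt (Af (i, b)) ^ 2) *
            Real.sqrt (∑ b, Real.sqrt (qf (i, b)) ^ 2) :=
          cs_sqrt _ _ _ (fun _ _ => Real.sqrt_nonneg _) (fun _ _ => Real.sqrt_nonneg _)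
      _ = Real.sqrt (a i) * Real.sqrt (p i) := by
          rw [Finset.sum_congr rfl fun b _ => Real.sq_sqrt (hAnn (i, b)),
            Finset.sum_congr rfl fun b _ => Real.sq_sqrt (hqnn (i, b)), hF3 i, hadef]
  have hsum_a : ∑ i, a i ≤ opNorm O ^ 2 := by
    have : ∑ i, a i = ∑ j : α × β, Af j := by
      rw [Fintype.sum_prod_type]
    rw [this]; exact hF2
  have hopnn : (0:ℝ) ≤ opNorm O := norm_nonneg _
  have hsqrt_a : ∀ i, Real.sqrt (a i) ≤ opNorm O := by
    intro i
    rw [show opNorm O = Real.sqrt (opNorm O ^ 2) by rw [Real.sqrt_sq hopnn]]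
    exact Real.sqrt_le_sqrt
      ((Finset.single_le_sum (fun j _ => hann j) (Finset.mem_univ i)).trans hsum_a)
  have hsum_s : ∑ i, s i ≤ opNorm O := by
    calc ∑ i, s i ≤ ∑ i, Real.sqrt (a i) * Real.sqrt (p i) :=
          Finset.sum_le_sum fun i _ => hs_le i
      _ ≤ Real.sqrt (∑ i, Real.sqrt (a i) ^ 2) * Real.sqrt (∑ i, Real.sqrt (p i) ^ 2) :=
          cs_sqrt _ _ _ (fun _ _ => Real.sqrt_nonneg _) (fun _ _ => Real.sqrt_nonneg _)
      _ = Real.sqrt (∑ i, a i) * Real.sqrt (∑ i, p i) := by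
          rw [Finset.sum_congr rfl fun i _ => Real.sq_sqrt (hann i),
            Finset.sum_congr rfl fun i _ => Real.sq_sqrt (hppos i).le]
      _ ≤ Real.sqrt (opNorm O ^ 2) * Real.sqrt 1 := by
          apply mul_le_mul (Real.sqrt_le_sqrt hsum_a)
            (Real.sqrt_le_sqrt (le_of_eq hpsum)) (Real.sqrt_nonneg _) (Real.sqrt_nonneg _)
      _ = opNorm O := by rw [Real.sqrt_one, Real.sqrt_sq hopnn, mul_one]
  have habs : ‖(ρ * extA (matLog ρA) * O).trace‖ ≤
      ∑ i, |Real.log (p i)| * s i := by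
    rw [hkey]
    calc ‖∑ j : α × β, (Real.log (p j.1) : ℂ) * N j j‖
        ≤ ∑ j : α × β, ‖(Real.log (p j.1) : ℂ) * N j j‖ :=
          norm_sum_le _ _
      _ = ∑ j : α × β, |Real.log (p j.1)| * ‖N j j‖ := by
          refine Finset.sum_congr rfl fun j _ => ?_
          rw [norm_mul, Complex.norm_real, Real.norm_eq_abs]
      _ = ∑ i, |Real.log (p i)| * s i := by
          rw [Fintype.sum_prod_type]
          exact Finset.sum_congr rfl fun i _ => by rw [hsdef, Finset.mul_sum]
  -- split into large and small eigenvalues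
  set L : Finset α := Finset.univ.filter (fun i => (d ^ 4)⁻¹ ≤ p i) with hLdef
  have hsplit : ∑ i, |Real.log (p i)| * s i =
      (∑ i ∈ L, |Real.log (p i)| * s i) +
      ∑ i ∈ Finset.univ.filter (fun i => ¬ (d ^ 4)⁻¹ ≤ p i), |Real.log (p i)| * s i := by
    rw [hLdef]
    exact (Finset.sum_filter_add_sum_filter_not _ _ _).symm
  have hlarge : ∑ i ∈ L, |Real.log (p i)| * s i ≤ 4 * Real.log d * opNorm O := by
    calc ∑ i ∈ L, |Real.log (p i)| * s i
        ≤ ∑ i ∈ L, (4 * Real.log d) * s i := by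
          refine Finset.sum_le_sum fun i hi => ?_
          have hcond : (d ^ 4)⁻¹ ≤ p i := (Finset.mem_filter.mp hi).2
          exact mul_le_mul_of_nonneg_right (log_large hd2 hcond (hple i)) (hsnn i)
      _ ≤ ∑ i, (4 * Real.log d) * s i := by
          apply Finset.sum_le_sum_of_subset_of_nonneg (Finset.subset_univ _)
          intro i _ _
          exact mul_nonneg (by positivity) (hsnn i)
      _ = (4 * Real.log d) * ∑ i, s i := by rw [Finset.mul_sum]
      _ ≤ (4 * Real.log d) * opNorm O :=
          mul_le_mul_of_nonneg_left hsum_s (by positivity)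
  have hsmall : ∑ i ∈ Finset.univ.filter (fun i => ¬ (d ^ 4)⁻¹ ≤ p i),
      |Real.log (p i)| * s i ≤ 2 * Real.log d * opNorm O := by
    have hterm : ∀ i ∈ Finset.univ.filter (fun i => ¬ (d ^ 4)⁻¹ ≤ p i),
        |Real.log (p i)| * s i ≤ (2 * Real.log d / d) * opNorm O := by
      intro i hi
      have hcond : p i < (d ^ 4)⁻¹ := lt_of_not_ge (Finset.mem_filter.mp hi).2
      calc |Real.log (p i)| * s i
          ≤ |Real.log (p i)| * (Real.sqrt (a i) * Real.sqrt (p i)) :=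
            mul_le_mul_of_nonneg_left (hs_le i) (abs_nonneg _)
        _ = (|Real.log (p i)| * Real.sqrt (p i)) * Real.sqrt (a i) := by ring
        _ ≤ (2 * Real.log d / d) * opNorm O := by
            apply mul_le_mul (log_small hd2 (hppos i) hcond) (hsqrt_a i)
              (Real.sqrt_nonneg _)
            positivity
    calc ∑ i ∈ Finset.univ.filter (fun i => ¬ (d ^ 4)⁻¹ ≤ p i),
        |Real.log (p i)| * s i
        ≤ ∑ _i ∈ Finset.univ.filter (fun i => ¬ (d ^ 4)⁻¹ ≤ p i),
            (2 * Real.log d / d) * opNorm O := Finset.sum_le_sum hterm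
      _ = (Finset.univ.filter (fun i => ¬ (d ^ 4)⁻¹ ≤ p i)).card •
            ((2 * Real.log d / d) * opNorm O) := by rw [Finset.sum_const]
      _ ≤ (Fintype.card α) • ((2 * Real.log d / d) * opNorm O) := by
          apply nsmul_le_nsmul_left (by positivity)
          exact (Finset.card_filter_le _ _).trans (le_of_eq (Finset.card_univ))
      _ = d * ((2 * Real.log d / d) * opNorm O) := by
          rw [nsmul_eq_mul, hdd]
      _ = 2 * Real.log d * opNorm O := by
          field_simp
  refine habs.trans ?_
  rw [hsplit]
  calc (∑ i ∈ L, |Real.log (p i)| * s i) +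
        ∑ i ∈ Finset.univ.filter (fun i => ¬ (d ^ 4)⁻¹ ≤ p i), |Real.log (p i)| * s i
      ≤ 4 * Real.log d * opNorm O + 2 * Real.log d * opNorm O := add_le_add hlarge hsmall
    _ = 6 * opNorm O * Real.log d := by ring


end
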